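/- Let A ∈ ℝ^{M×n} and H ∈ ℝ^{n×n} symmetric positive definite, a > 0, ỹ ∈ ℝ^M. Then the solution β_a of (AᵀA + aH)β = Aᵀỹ satisfies β_a → β₀ as a → 0⁺, where β₀ = H^{-1/2}(H^{-1/2}AᵀAH^{-1/2})⁺H^{-1/2}Aᵀỹ is the minimum-H-norm least-squares solution of Aβ = ỹ (here ⁺ denotes the Moore–Penrose pseudoinverse). -/

import Mathlib

open Matrix

noncomputable section

private lemma dotSelfNonneg {ι : Type*} [Fintype ι] (v : ι → ℝ) : 0 ≤ v ⬝ᵥ v :=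
  Finset.sum_nonneg fun i _ => mul_self_nonneg (v i)

private lemma dotCS {ι : Type*} [Fintype ι] (v w : ι → ℝ) :
    (v ⬝ᵥ w) ^ 2 ≤ (v ⬝ᵥ v) * (w ⬝ᵥ w) := by
  have := Finset.sum_mul_sq_le_sq_mul_sq Finset.univ v w
  simpa [dotProduct, pow_two] using this

private lemma keyBound {ι : Type*} [Fintype ι] (u z : ι → ℝ) (a kq : ℝ) (ha : 0 < a)
    (hkq : 0 ≤ kq) (hdot : kq + a * (u ⬝ᵥ u) = a ^ 2 * (u ⬝ᵥ z)) :
    (u - a • z) ⬝ᵥ (u - a • z) ≤ 2 * a ^ 2 * (z ⬝ᵥ z) := by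
  have huz : 0 ≤ u ⬝ᵥ z := by nlinarith [dotSelfNonneg u, pow_pos ha 2]
  have huu : u ⬝ᵥ u ≤ a * (u ⬝ᵥ z) := by
    have h5 : a * (u ⬝ᵥ u) ≤ a * (a * (u ⬝ᵥ z)) := by nlinarith
    exact le_of_mul_le_mul_left h5 ha
  have huu2 : u ⬝ᵥ u ≤ a ^ 2 * (z ⬝ᵥ z) := by
    rcases eq_or_lt_of_le (dotSelfNonneg u) with h | h
    · rw [← h]; exact mul_nonneg (sq_nonneg a) (dotSelfNonneg z)
    · have h6 : (u ⬝ᵥ u) * (u ⬝ᵥ u) ≤ (a ^ 2 * (z ⬝ᵥ z)) * (u ⬝ᵥ u) := by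
        nlinarith [dotCS u z, huz, huu, dotSelfNonneg z]
      exact le_of_mul_le_mul_right h6 h
  have hexp : (u - a • z) ⬝ᵥ (u - a • z)
      = u ⬝ᵥ u - a * (u ⬝ᵥ z) - a * (u ⬝ᵥ z) + a * a * (z ⬝ᵥ z) := by
    simp [sub_dotProduct, dotProduct_sub, dotProduct_smul,
      smul_dotProduct, smul_eq_mul, dotProduct_comm z u]
    ring
  rw [hexp]
  nlinarith

/-- **Convergence of Tikhonov solutions to the minimum-`H`-norm least-squares
solution.** Let `A ∈ ℝ^{M×n}`, `H ∈ ℝ^{n×n}` symmetric positive definite,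
`a > 0`, `ỹ ∈ ℝ^M`. Let `S = H^{-1/2}` be the symmetric positive definite
square root of `H⁻¹` and let `P` be the Moore–Penrose pseudoinverse of
`K = H^{-1/2}AᵀAH^{-1/2}` (characterized by the four Penrose conditions).
Then the solution `β a` of `(AᵀA + aH)β = Aᵀỹ` satisfies `β a → β₀` as
`a → 0⁺`, where `β₀ = H^{-1/2}(H^{-1/2}AᵀAH^{-1/2})⁺H^{-1/2}Aᵀỹ` is the
minimum-`H`-norm least-squares solution of `Aβ = ỹ`. -/
theorem stmt17 (M n : ℕ)
    (A : Matrix (Fin M) (Fin n) ℝ)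
    (H : Matrix (Fin n) (Fin n) ℝ) (hH : H.PosDef)
    (ytil : Fin M → ℝ)
    -- S = H^{-1/2}: the symmetric positive definite square root of H⁻¹
    (S : Matrix (Fin n) (Fin n) ℝ) (hSpd : S.PosDef) (hSsymm : S.IsSymm)
    (hSsq : S * S = H⁻¹)
    -- P = (S AᵀA S)⁺: the Moore–Penrose pseudoinverse, via the Penrose conditions
    (P : Matrix (Fin n) (Fin n) ℝ)
    (hP1 : (S * Aᵀ * A * S) * P * (S * Aᵀ * A * S) = S * Aᵀ * A * S)
    (hP2 : P * (S * Aᵀ * A * S) * P = P)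
    (hP3 : ((S * Aᵀ * A * S) * P)ᵀ = (S * Aᵀ * A * S) * P)
    (hP4 : (P * (S * Aᵀ * A * S))ᵀ = P * (S * Aᵀ * A * S))
    -- β a : the solution of the regularized normal equation for each a > 0
    (β : ℝ → Fin n → ℝ)
    (hβ : ∀ a : ℝ, 0 < a → (Aᵀ * A + a • H) *ᵥ β a = Aᵀ *ᵥ ytil)
    (β₀ : Fin n → ℝ)
    (hβ₀ : β₀ = S *ᵥ (P *ᵥ (S *ᵥ (Aᵀ *ᵥ ytil)))) :
    Filter.Tendsto β (nhdsWithin 0 (Set.Ioi 0)) (nhds β₀) ∧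
    -- β₀ is the minimum-H-norm least-squares solution of Aβ = ỹ
    (∀ β' : Fin n → ℝ,
      (A *ᵥ β₀ - ytil) ⬝ᵥ (A *ᵥ β₀ - ytil) ≤ (A *ᵥ β' - ytil) ⬝ᵥ (A *ᵥ β' - ytil)) ∧
    (∀ β' : Fin n → ℝ,
      ((A *ᵥ β' - ytil) ⬝ᵥ (A *ᵥ β' - ytil)
          = (A *ᵥ β₀ - ytil) ⬝ᵥ (A *ᵥ β₀ - ytil)) →
        β₀ ⬝ᵥ (H *ᵥ β₀) ≤ β' ⬝ᵥ (H *ᵥ β')) := by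
  -- basic invertibility facts
  have hSdet : IsUnit S.det := hSpd.det_pos.ne'.isUnit
  have hSS' : S * S⁻¹ = 1 := Matrix.mul_nonsing_inv S hSdet
  have hS'S : S⁻¹ * S = 1 := Matrix.nonsing_inv_mul S hSdet
  have hHdet : IsUnit H.det := hH.det_pos.ne'.isUnit
  have hHSS : H = S⁻¹ * S⁻¹ := by
    rw [← Matrix.mul_inv_rev, hSsq, Matrix.nonsing_inv_nonsing_inv H hHdet]
  set K := S * Aᵀ * A * S with hK
  have hKT : Kᵀ = K := by
    rw [hK]
    simp [Matrix.transpose_mul, Matrix.transpose_transpose, hSsymm.eq, Matrix.mul_assoc]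
  have hBt : (S * Aᵀ)ᵀ = A * S := by
    rw [Matrix.transpose_mul, Matrix.transpose_transpose, hSsymm.eq]
  -- K * (K * P) = K
  have hKQw : K * (K * P) = K := by
    have h1 : (K * (K * P))ᵀ = K := by
      rw [Matrix.transpose_mul, hP3, hKT, hP1]
    calc K * (K * P) = ((K * (K * P))ᵀ)ᵀ := (Matrix.transpose_transpose _).symm
      _ = Kᵀ := by rw [h1]
      _ = K := hKT
  have hP1w : K * (P * K) = K := by rw [← Matrix.mul_assoc]; exact hP1
  have hBBw : ∀ X : Matrix (Fin n) (Fin n) ℝ, S * (Aᵀ * (A * (S * X))) = K * X := by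
    intro X; rw [hK]; simp only [Matrix.mul_assoc]
  have hBB1 : S * (Aᵀ * (A * S)) = K := by rw [hK]; simp only [Matrix.mul_assoc]
  -- the key projection identity K * P * (S * Aᵀ) = S * Aᵀ
  have hKPB : K * P * (S * Aᵀ) = S * Aᵀ := by
    have hMt : (K * P * (S * Aᵀ))ᵀ = (A * S) * (K * P) := by
      rw [Matrix.transpose_mul, hP3, hBt]
    have h0 : (K * P * (S * Aᵀ) - S * Aᵀ) * (K * P * (S * Aᵀ) - S * Aᵀ)ᵀ = 0 := by
      rw [Matrix.transpose_sub, hMt, hBt]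
      simp only [Matrix.sub_mul, Matrix.mul_sub, Matrix.mul_assoc]
      simp only [hBBw, hBB1, hKQw, hP1w]
      simp
    have h1 : (K * P * (S * Aᵀ) - S * Aᵀ) = 0 := by
      apply Matrix.self_mul_conjTranspose_eq_zero.mp
      rw [Matrix.conjTranspose_eq_transpose_of_trivial]; exact h0
    exact sub_eq_zero.mp h1
  -- P = K * (Pᵀ * P)
  have hPK : P * K = K * Pᵀ := by
    conv_lhs => rw [← hP4]
    rw [Matrix.transpose_mul, hKT]
  have hPfac : P = K * (Pᵀ * P) := by
    calc P = P * K * P := hP2.symm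
      _ = (K * Pᵀ) * P := by rw [hPK]
      _ = K * (Pᵀ * P) := Matrix.mul_assoc _ _ _
  -- vectors
  set c : Fin n → ℝ := S *ᵥ (Aᵀ *ᵥ ytil) with hc
  set y0 : Fin n → ℝ := P *ᵥ c with hy0
  set z : Fin n → ℝ := (Pᵀ * P) *ᵥ c with hz
  have hβ₀' : β₀ = S *ᵥ y0 := hβ₀
  have hKy0 : K *ᵥ y0 = c := by
    rw [hy0, hc]
    simp only [Matrix.mulVec_mulVec]
    rw [← Matrix.mul_assoc, hKPB]
  have hy0z : K *ᵥ z = y0 := by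
    rw [hz, hy0, Matrix.mulVec_mulVec, ← hPfac]
  -- transformed regularized equation
  have e2 : S * (Aᵀ * A) = K * S⁻¹ := by
    rw [hK, Matrix.mul_assoc (S * Aᵀ * A) S S⁻¹, hSS', Matrix.mul_one, Matrix.mul_assoc]
  have e3 : S * H = S⁻¹ := by
    rw [hHSS, ← Matrix.mul_assoc, hSS', Matrix.one_mul]
  set x : ℝ → Fin n → ℝ := fun a => S⁻¹ *ᵥ β a with hx
  have hstep : ∀ a : ℝ, 0 < a → K *ᵥ x a + a • x a = c := by
    intro a ha
    have h2 : S *ᵥ ((Aᵀ * A + a • H) *ᵥ β a) = c := by rw [hβ a ha, hc]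
    rw [Matrix.mulVec_mulVec, Matrix.mul_add, Matrix.mul_smul, e2, e3,
      Matrix.add_mulVec, Matrix.smul_mulVec, ← Matrix.mulVec_mulVec] at h2
    exact h2
  have hβS : ∀ a : ℝ, β a = S *ᵥ x a := by
    intro a
    rw [hx]
    simp only [Matrix.mulVec_mulVec, hSS', Matrix.one_mulVec]
  -- the perturbation identity
  set u : ℝ → Fin n → ℝ := fun a => (x a - y0) + a • z with hu
  have huEq : ∀ a : ℝ, 0 < a → K *ᵥ u a + a • u a = (a ^ 2) • z := by
    intro a ha
    have h2 := hstep a ha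
    have h3 : K *ᵥ x a = c - a • x a := by rw [← h2]; abel
    simp only [hu, Matrix.mulVec_add, Matrix.mulVec_sub, Matrix.mulVec_smul, hy0z, hKy0,
      h3, smul_add, smul_sub, smul_smul]
    module
  -- positivity of K quadratic form
  have hKB : K = (A * S)ᵀ * (A * S) := by
    rw [Matrix.transpose_mul, hSsymm.eq, hK]
    simp only [Matrix.mul_assoc]
  have hKnn : ∀ v : Fin n → ℝ, 0 ≤ v ⬝ᵥ (K *ᵥ v) := by
    intro v
    have : v ⬝ᵥ (K *ᵥ v) = ((A * S) *ᵥ v) ⬝ᵥ ((A * S) *ᵥ v) := by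
      rw [hKB, ← Matrix.mulVec_mulVec, Matrix.dotProduct_mulVec, Matrix.vecMul_transpose]
    rw [this]; exact dotSelfNonneg _
  -- quantitative bound on d a = x a - y0
  have hdd : ∀ a : ℝ, 0 < a →
      (x a - y0) ⬝ᵥ (x a - y0) ≤ 2 * a ^ 2 * (z ⬝ᵥ z) := by
    intro a ha
    have hdot : u a ⬝ᵥ (K *ᵥ u a) + a * (u a ⬝ᵥ u a) = a ^ 2 * (u a ⬝ᵥ z) := by
      have := congrArg (fun v => u a ⬝ᵥ v) (huEq a ha)
      simpa [dotProduct_add, dotProduct_smul, smul_eq_mul] using this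
    have hxy : x a - y0 = u a - a • z := by rw [hu]; beta_reduce; abel
    rw [hxy]
    exact keyBound (u a) z a _ ha (hKnn (u a)) hdot
  -- per-coordinate convergence
  have hconv : Filter.Tendsto β (nhdsWithin 0 (Set.Ioi 0)) (nhds β₀) := by
    rw [tendsto_pi_nhds]
    intro i
    rw [← tendsto_sub_nhds_zero_iff]
    set E : ℝ := (∑ j, (S i j) ^ 2) * (2 * (z ⬝ᵥ z)) with hE
    have hE0 : 0 ≤ E := by
      apply mul_nonneg
      · exact Finset.sum_nonneg fun j _ => sq_nonneg _
      · have := dotSelfNonneg z; linarith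
    have hbound : ∀ a ∈ Set.Ioi (0:ℝ), ‖β a i - β₀ i‖ ≤ Real.sqrt E * a := by
      intro a ha
      rw [Set.mem_Ioi] at ha
      have hda : β a - β₀ = S *ᵥ (x a - y0) := by
        rw [hβS a, hβ₀', Matrix.mulVec_sub]
      have hcoord : β a i - β₀ i = ∑ j, S i j * (x a - y0) j := by
        have := congrFun hda i
        simpa [Matrix.mulVec, dotProduct] using this
      have hsq : (β a i - β₀ i) ^ 2 ≤ E * a ^ 2 := by
        rw [hcoord]
        calc (∑ j, S i j * (x a - y0) j) ^ 2
            ≤ (∑ j, (S i j) ^ 2) * (∑ j, ((x a - y0) j) ^ 2) :=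
              Finset.sum_mul_sq_le_sq_mul_sq Finset.univ _ _
          _ = (∑ j, (S i j) ^ 2) * ((x a - y0) ⬝ᵥ (x a - y0)) := by
              simp [dotProduct, pow_two]
          _ ≤ (∑ j, (S i j) ^ 2) * (2 * a ^ 2 * (z ⬝ᵥ z)) := by
              apply mul_le_mul_of_nonneg_left (hdd a ha)
              exact Finset.sum_nonneg fun j _ => sq_nonneg _
          _ = E * a ^ 2 := by rw [hE]; ring
      calc ‖β a i - β₀ i‖ = Real.sqrt ((β a i - β₀ i) ^ 2) := by
            rw [Real.sqrt_sq_eq_abs, Real.norm_eq_abs]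
        _ ≤ Real.sqrt (E * a ^ 2) := Real.sqrt_le_sqrt hsq
        _ = Real.sqrt E * a := by
            rw [Real.sqrt_mul hE0, Real.sqrt_sq_eq_abs, abs_of_pos ha]
    apply squeeze_zero_norm' (eventually_nhdsWithin_of_forall hbound)
    have h7 : Filter.Tendsto (fun a : ℝ => Real.sqrt E * a) (nhds 0)
        (nhds (Real.sqrt E * 0)) := (Filter.Tendsto.const_mul _ Filter.tendsto_id)
    rw [mul_zero] at h7
    exact h7.mono_left nhdsWithin_le_nhds
  -- normal equations for β₀
  have hNE : Aᵀ *ᵥ (A *ᵥ β₀) = Aᵀ *ᵥ ytil := by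
    have h8 : S *ᵥ (Aᵀ *ᵥ (A *ᵥ β₀)) = S *ᵥ (Aᵀ *ᵥ ytil) := by
      rw [hβ₀']
      simp only [Matrix.mulVec_mulVec]
      rw [show S * (Aᵀ * (A * S)) = K from hBB1, hKy0, hc]
      simp only [Matrix.mulVec_mulVec]
    have h9 := congrArg (fun v => S⁻¹ *ᵥ v) h8
    simp only [Matrix.mulVec_mulVec] at h9
    rw [← Matrix.mul_assoc S⁻¹ S, hS'S, Matrix.one_mul, ← Matrix.mul_assoc S⁻¹ S, hS'S,
      Matrix.one_mul] at h9
    rw [Matrix.mulVec_mulVec]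
    exact h9
  have hAtr : Aᵀ *ᵥ (A *ᵥ β₀ - ytil) = 0 := by
    rw [Matrix.mulVec_sub, hNE, sub_self]
  have hcross : ∀ w : Fin n → ℝ, (A *ᵥ w) ⬝ᵥ (A *ᵥ β₀ - ytil) = 0 := by
    intro w
    rw [← Matrix.vecMul_transpose, ← Matrix.dotProduct_mulVec, hAtr, dotProduct_zero]
  have hexpand : ∀ β' : Fin n → ℝ, (A *ᵥ β' - ytil) ⬝ᵥ (A *ᵥ β' - ytil)
      = (A *ᵥ (β' - β₀)) ⬝ᵥ (A *ᵥ (β' - β₀)) + (A *ᵥ β₀ - ytil) ⬝ᵥ (A *ᵥ β₀ - ytil) := by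
    intro β'
    have hdec : A *ᵥ β' - ytil = A *ᵥ (β' - β₀) + (A *ᵥ β₀ - ytil) := by
      rw [Matrix.mulVec_sub]; abel
    rw [hdec, add_dotProduct, dotProduct_add, dotProduct_add, hcross,
      dotProduct_comm (A *ᵥ β₀ - ytil), hcross]
    ring
  have hLS : ∀ β' : Fin n → ℝ,
      (A *ᵥ β₀ - ytil) ⬝ᵥ (A *ᵥ β₀ - ytil) ≤ (A *ᵥ β' - ytil) ⬝ᵥ (A *ᵥ β' - ytil) := by
    intro β'
    rw [hexpand β']
    have := dotSelfNonneg (A *ᵥ (β' - β₀))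
    linarith
  -- minimum H-norm
  have hHsym : Hᵀ = H := by
    have := hH.1
    rwa [Matrix.IsHermitian, Matrix.conjTranspose_eq_transpose_of_trivial] at this
  have hHβ₀ : H *ᵥ β₀ = (Aᵀ * A * S) *ᵥ z := by
    have e4 : H * S = S⁻¹ := by rw [hHSS, Matrix.mul_assoc, hS'S, Matrix.mul_one]
    have e5 : S⁻¹ * K = Aᵀ * A * S := by
      rw [hK]
      simp only [← Matrix.mul_assoc]
      rw [hS'S, Matrix.one_mul]
    rw [hβ₀', Matrix.mulVec_mulVec, e4, ← hy0z, Matrix.mulVec_mulVec, e5]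
  have hMin : ∀ β' : Fin n → ℝ,
      ((A *ᵥ β' - ytil) ⬝ᵥ (A *ᵥ β' - ytil) = (A *ᵥ β₀ - ytil) ⬝ᵥ (A *ᵥ β₀ - ytil)) →
        β₀ ⬝ᵥ (H *ᵥ β₀) ≤ β' ⬝ᵥ (H *ᵥ β') := by
    intro β' heq
    have h10 : (A *ᵥ (β' - β₀)) ⬝ᵥ (A *ᵥ (β' - β₀)) = 0 := by
      have := hexpand β'
      rw [heq] at this
      linarith
    have hAδ : A *ᵥ (β' - β₀) = 0 := dotProduct_self_eq_zero.mp h10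
    have hδH : (β' - β₀) ⬝ᵥ (H *ᵥ β₀) = 0 := by
      rw [hHβ₀, Matrix.dotProduct_mulVec]
      have h11 : (β' - β₀) ᵥ* (Aᵀ * A * S) = 0 := by
        rw [← Matrix.vecMul_vecMul, ← Matrix.vecMul_vecMul, Matrix.vecMul_transpose, hAδ,
          Matrix.zero_vecMul, Matrix.zero_vecMul]
      rw [h11, zero_dotProduct]
    have hδHδ : 0 ≤ (β' - β₀) ⬝ᵥ (H *ᵥ (β' - β₀)) := by
      have := hH.posSemidef.dotProduct_mulVec_nonneg (β' - β₀)
      simpa using this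
    have hsymm' : β₀ ⬝ᵥ (H *ᵥ (β' - β₀)) = (β' - β₀) ⬝ᵥ (H *ᵥ β₀) := by
      rw [Matrix.dotProduct_mulVec, ← Matrix.mulVec_transpose, hHsym,
        dotProduct_comm]
    have hβ'd : β' = β₀ + (β' - β₀) := by abel
    calc β₀ ⬝ᵥ (H *ᵥ β₀) ≤ β₀ ⬝ᵥ (H *ᵥ β₀) + ((β' - β₀) ⬝ᵥ (H *ᵥ (β' - β₀))) := by linarith
      _ = β' ⬝ᵥ (H *ᵥ β') := by
          conv_rhs => rw [hβ'd]
          rw [Matrix.mulVec_add, add_dotProduct, dotProduct_add,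
            dotProduct_add, hδH, hsymm']
          rw [hδH]
          ring
  exact ⟨hconv, hLS, hMin⟩
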